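/- Let P(k) = (P_1(k),...,P_n(k)) be strictly positive reals evolving as P_i(k+1) = u_i(k) · ∏_{ĵ} P_ĵ(k)^{a_{iĵ}(k)}, where A(k) = [a_{iĵ}(k)] is doubly stochastic, u_i(k) > 0, and u_i(k) = 1 for all k outside a finite set D. If the products A(k)···A(k0) converge to (1/n)·11^T, then for every i, lim_{k→∞} P_i(k) = (∏_j P_j(0))^{1/n} · ∏_{d∈D} (∏_j u_j(d))^{1/n}; that is, each P_i converges to the geometric mean of the initial values times the product over d∈D of the geometric means of the update vectors u(d). -/

import Mathlib

def IsDoublyStochastic {n : ℕ} (M : Matrix (Fin n) (Fin n) ℝ) : Prop :=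
  (∀ i j, 0 ≤ M i j) ∧ (∀ i, ∑ j, M i j = 1) ∧ (∀ j, ∑ i, M i j = 1)

/-- `Phi A j k = A k * A (k-1) * ··· * A j` (empty product is the identity). -/
def Phi {n : ℕ} (A : ℕ → Matrix (Fin n) (Fin n) ℝ) (j k : ℕ) : Matrix (Fin n) (Fin n) ℝ :=
  ((List.range (k + 1 - j)).map (fun t => A (k - t))).prod

open Matrix

lemma Phi_succ {n : ℕ} (A : ℕ → Matrix (Fin n) (Fin n) ℝ) {j k : ℕ} (h : j ≤ k + 1) :
    Phi A j (k + 1) = A (k + 1) * Phi A j k := by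
  unfold Phi
  have h1 : k + 1 + 1 - j = (k + 1 - j) + 1 := by omega
  rw [h1, List.range_succ_eq_map]
  simp only [List.map_cons, List.prod_cons, List.map_map, Function.comp_def, Nat.sub_zero,
    Nat.succ_sub_succ]

lemma Phi_empty {n : ℕ} (A : ℕ → Matrix (Fin n) (Fin n) ℝ) (k : ℕ) :
    Phi A (k + 1) k = 1 := by
  unfold Phi
  simp

lemma Phi_self {n : ℕ} (A : ℕ → Matrix (Fin n) (Fin n) ℝ) (k : ℕ) :
    Phi A k k = A k := by
  unfold Phi
  simp [List.range_succ]

lemma mulVec_sumAux {n : ℕ} (A : Matrix (Fin n) (Fin n) ℝ) {ι : Type*} (s : Finset ι)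
    (w : ι → Fin n → ℝ) : A *ᵥ (∑ d ∈ s, w d) = ∑ d ∈ s, A *ᵥ w d := by
  ext i
  simp only [Matrix.mulVec, dotProduct, Finset.sum_apply, Finset.mul_sum]
  exact Finset.sum_comm


/-- Theorem 1 of the paper: under the multiplicative consensus protocol
`P_i(k+1) = u_i(k) · ∏_ĵ P_ĵ(k)^{a_{iĵ}(k)}` with doubly stochastic `A(k)`, update
values equal to 1 outside a finite set `D`, and products converging to the averaging
matrix, each `P_i(k)` converges to the geometric mean of the initial values times
the product over `d ∈ D` of the geometric means of the update vectors. -/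
theorem multiplicative_consensus_limit {n : ℕ} (hn : 0 < n)
    (A : ℕ → Matrix (Fin n) (Fin n) ℝ) (hA : ∀ k, IsDoublyStochastic (A k))
    (P u : ℕ → Fin n → ℝ) (hP0 : ∀ i, 0 < P 0 i) (hupos : ∀ k i, 0 < u k i)
    (D : Finset ℕ) (huD : ∀ k, k ∉ D → ∀ i, u k i = 1)
    (hdyn : ∀ k i, P (k+1) i = u k i * ∏ j, (P k j) ^ (A k i j))
    (hconv : ∀ k0, Filter.Tendsto (fun k => Phi A k0 k) Filter.atTop
      (nhds ((n : ℝ)⁻¹ • Matrix.of (fun _ _ => (1:ℝ))))) :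
    ∀ i, Filter.Tendsto (fun k => P k i) Filter.atTop
      (nhds ((∏ j, P 0 j) ^ ((n : ℝ)⁻¹) * ∏ d ∈ D, (∏ j, u d j) ^ ((n : ℝ)⁻¹))) := by
  classical
  have hpos : ∀ k i, 0 < P k i := by
    intro k
    induction k with
    | zero => exact hP0
    | succ k ih =>
      intro i
      rw [hdyn]
      exact mul_pos (hupos k i) (Finset.prod_pos fun j _ => Real.rpow_pos_of_pos (ih j) _)
  set L : ℕ → Fin n → ℝ := fun k i => Real.log (P k i) with hL
  set v : ℕ → Fin n → ℝ := fun d j => Real.log (u d j) with hv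
  have hvD : ∀ d, d ∉ D → v d = 0 := by
    intro d hd
    funext j
    simp [hv, huD d hd j]
  have hrec : ∀ k, L (k+1) = A k *ᵥ L k + v k := by
    intro k
    funext i
    show Real.log (P (k+1) i) = (∑ j, A k i j * L k j) + v k i
    rw [hdyn, Real.log_mul (ne_of_gt (hupos k i))
      (ne_of_gt (Finset.prod_pos fun j _ => Real.rpow_pos_of_pos (hpos k j) _)),
      Real.log_prod (fun j _ => ne_of_gt (Real.rpow_pos_of_pos (hpos k j) _))]
    simp only [Real.log_rpow (hpos _ _)]
    exact add_comm _ _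
  have hclosed : ∀ k, L (k+1) =
      Phi A 0 k *ᵥ L 0 + ∑ d ∈ Finset.range (k+1), Phi A (d+1) k *ᵥ v d := by
    intro k
    induction k with
    | zero =>
      rw [hrec 0]
      simp [Phi_self, Phi_empty, Matrix.one_mulVec]
    | succ k ih =>
      rw [hrec (k+1), ih]
      rw [Matrix.mulVec_add, mulVec_sumAux]
      rw [Phi_succ A (Nat.zero_le _), ← Matrix.mulVec_mulVec]
      rw [Finset.sum_range_succ (fun d => Phi A (d+1) (k+1) *ᵥ v d), Phi_empty,
        Matrix.one_mulVec, add_assoc]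
      congr 1
      congr 1
      apply Finset.sum_congr rfl
      intro d hd
      rw [Phi_succ A (Nat.succ_le_succ (Nat.lt_succ_iff.mp (Finset.mem_range.mp hd))),
        ← Matrix.mulVec_mulVec]
  -- entrywise convergence of Phi
  have hentry : ∀ k0 (i j : Fin n),
      Filter.Tendsto (fun k => Phi A k0 k i j) Filter.atTop (nhds ((n:ℝ)⁻¹)) := by
    intro k0 i j
    have := ((continuous_apply j).tendsto _).comp
      (((continuous_apply i).tendsto _).comp (hconv k0))
    simp [Function.comp_def, Matrix.smul_apply, Matrix.of_apply] at this
    exact this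
  set ℓ : ℝ := (∑ j, (n:ℝ)⁻¹ * L 0 j) + ∑ d ∈ D, ∑ j, (n:ℝ)⁻¹ * v d j with hℓ
  have hLlim : ∀ i, Filter.Tendsto (fun k => L (k+1) i) Filter.atTop (nhds ℓ) := by
    intro i
    have h1 : Filter.Tendsto (fun k => (Phi A 0 k *ᵥ L 0) i) Filter.atTop
        (nhds (∑ j, (n:ℝ)⁻¹ * L 0 j)) := by
      simp only [Matrix.mulVec, dotProduct]
      exact tendsto_finset_sum _ fun j _ => (hentry 0 i j).mul_const _
    have h2 : Filter.Tendsto (fun k => ∑ d ∈ D, (Phi A (d+1) k *ᵥ v d) i) Filter.atTop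
        (nhds (∑ d ∈ D, ∑ j, (n:ℝ)⁻¹ * v d j)) := by
      refine tendsto_finset_sum _ fun d _ => ?_
      simp only [Matrix.mulVec, dotProduct]
      exact tendsto_finset_sum _ fun j _ => (hentry (d+1) i j).mul_const _
    have heq : ∀ᶠ k in Filter.atTop,
        ((Phi A 0 k *ᵥ L 0) i + ∑ d ∈ D, (Phi A (d+1) k *ᵥ v d) i) = L (k+1) i := by
      filter_upwards [Filter.eventually_ge_atTop (D.sup id)] with k hk
      rw [hclosed k]
      have hsub : D ⊆ Finset.range (k+1) := by
        intro d hd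
        exact Finset.mem_range.mpr (Nat.lt_succ_of_le (le_trans (Finset.le_sup (f := id) hd) hk))
      simp only [Pi.add_apply, Finset.sum_apply]
      congr 1
      refine Finset.sum_subset hsub ?_
      intro d _ hd
      simp [hvD d hd, Matrix.mulVec_zero]
    exact Filter.Tendsto.congr' heq (h1.add h2)
  have hPlim : ∀ i, Filter.Tendsto (fun k => P (k+1) i) Filter.atTop (nhds (Real.exp ℓ)) := by
    intro i
    have := (Real.continuous_exp.tendsto ℓ).comp (hLlim i)
    refine this.congr fun k => ?_
    simp [Function.comp, hL, Real.exp_log (hpos (k+1) i)]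
  have htarget : Real.exp ℓ =
      (∏ j, P 0 j) ^ ((n : ℝ)⁻¹) * ∏ d ∈ D, (∏ j, u d j) ^ ((n : ℝ)⁻¹) := by
    rw [hℓ, Real.exp_add]
    congr 1
    · rw [← Finset.mul_sum, ← Real.log_prod (fun j _ => ne_of_gt (hP0 j)),
        Real.rpow_def_of_pos (Finset.prod_pos fun j _ => hP0 j), mul_comm]
    · rw [Real.exp_sum]
      apply Finset.prod_congr rfl
      intro d _
      rw [← Finset.mul_sum, ← Real.log_prod (fun j _ => ne_of_gt (hupos d j)),
        Real.rpow_def_of_pos (Finset.prod_pos fun j _ => hupos d j), mul_comm]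
  intro i
  rw [← htarget]
  exact (Filter.tendsto_add_atTop_iff_nat 1).mp (hPlim i)
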